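/- Let (𝒟, π) be a closed representation of a unital *-algebra A on a complex Hilbert space H. Then the set A' of all bounded operators x ∈ B(H) such that x(𝒟) ⊆ 𝒟, x*(𝒟) ⊆ 𝒟, x(π(a)ξ) = π(a)(xξ) and x*(π(a)ξ) = π(a)(x*ξ) for all a ∈ A and ξ ∈ 𝒟 (the adjointable *-intertwiners of π) is a unital C*-subalgebra of B(H): it contains the identity, is a subalgebra, is closed under taking adjoints, and is closed in the operator norm. -/

import Mathlib

/-- A representation of a unital `⋆`-algebra `A` on a complex Hilbert space `H`:
a dense subspace `dom ⊆ H` together with a unital algebra homomorphism `π` from `A` into the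
endomorphisms of `dom` satisfying `⟪π a ξ, η⟫ = ⟪ξ, π (star a) η⟫`. -/
structure HilbertRep (A : Type*) [Ring A] [Algebra ℂ A] [StarRing A] [StarModule ℂ A]
    (H : Type*) [NormedAddCommGroup H] [InnerProductSpace ℂ H] where
  dom : Submodule ℂ H
  dense : Dense (dom : Set H)
  π : A → (dom →ₗ[ℂ] dom)
  π_one : π 1 = LinearMap.id
  π_mul : ∀ a b : A, π (a * b) = (π a).comp (π b)
  π_add : ∀ a b : A, π (a + b) = π a + π b
  π_smul : ∀ (c : ℂ) (a : A), π (c • a) = c • π a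
  π_star : ∀ (a : A) (ξ η : dom),
    (inner ℂ ((π a ξ : dom) : H) (η : H) : ℂ) = inner ℂ (ξ : H) ((π (star a) η : dom) : H)

variable {A : Type*} [Ring A] [Algebra ℂ A] [StarRing A] [StarModule ℂ A]
variable {H : Type*} [NormedAddCommGroup H] [InnerProductSpace ℂ H] [CompleteSpace H]

/-- The operator `π a` of a representation, as a partially defined (unbounded) linear
operator on `H`. -/
def HilbertRep.op (ρ : HilbertRep A H) (a : A) : H →ₗ.[ℂ] H :=
  ⟨ρ.dom, ρ.dom.subtype.comp (ρ.π a)⟩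

/-- A representation is *closed* if its domain is the intersection of the domains of the
closures of all the operators `π a`. -/
def HilbertRep.IsClosedRep (ρ : HilbertRep A H) : Prop :=
  (ρ.dom : Set H) = ⋂ a : A, ((ρ.op a).closure.domain : Set H)

/-- A bounded operator `x` is an (adjointable) `⋆`-intertwiner of the representation `(𝒟, π)`
if both `x` and `x*` preserve `𝒟` and commute with every `π a` on `𝒟`. -/
def IsStarIntertwiner (ρ : HilbertRep A H) (x : H →L[ℂ] H) : Prop :=
  ∀ ξ : ρ.dom, ∃ η ζ : ρ.dom,
    (η : H) = x (ξ : H) ∧ (ζ : H) = ContinuousLinearMap.adjoint x (ξ : H) ∧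
    ∀ a : A, ((ρ.π a η : ρ.dom) : H) = x ((ρ.π a ξ : ρ.dom) : H) ∧
      ((ρ.π a ζ : ρ.dom) : H) = ContinuousLinearMap.adjoint x ((ρ.π a ξ : ρ.dom) : H)

open ContinuousLinearMap LinearPMap Filter Topology

lemma HilbertRep.op_apply (ρ : HilbertRep A H) (a : A) (ξ : ρ.dom) :
    ρ.op a ξ = ((ρ.π a ξ : ρ.dom) : H) := rfl

lemma HilbertRep.mem_graph_op (ρ : HilbertRep A H) (a : A) (ξ : ρ.dom) :
    ((ξ : H), ((ρ.π a ξ : ρ.dom) : H)) ∈ (ρ.op a).graph :=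
  (ρ.op a).mem_graph ξ

/-- If `(0, z)` is in the closure of the graph of `op a`, then `z = 0`. -/
lemma HilbertRep.snd_eq_zero (ρ : HilbertRep A H) (a : A) {z : H}
    (h : ((0 : H), z) ∈ (ρ.op a).graph.topologicalClosure) : z = 0 := by
  refine ρ.dense.eq_zero_of_inner_left (𝕜 := ℂ) fun v' hv => ?_
  obtain ⟨v, rfl⟩ : ∃ v : ρ.dom, (v : H) = v' := ⟨⟨v', hv⟩, rfl⟩
  have hset : ((ρ.op a).graph.topologicalClosure : Set (H × H)) ⊆
      {p : H × H | (inner ℂ p.2 (v : H) : ℂ) = inner ℂ p.1 ((ρ.π (star a) v : ρ.dom) : H)} := by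
    rw [Submodule.topologicalClosure_coe]
    refine closure_minimal ?_ (isClosed_eq (continuous_snd.inner continuous_const)
      (continuous_fst.inner continuous_const))
    rintro ⟨p1, p2⟩ hp
    rcases (ρ.op a).mem_graph_iff.mp hp with ⟨w, hw1, hw2⟩
    simp only [Set.mem_setOf_eq] at *
    subst hw1
    rw [← hw2]
    exact ρ.π_star a w v
  have := hset h
  simpa using this

/-- Each `op a` is closable. -/
lemma HilbertRep.op_isClosable (ρ : HilbertRep A H) (a : A) : (ρ.op a).IsClosable := by
  refine ⟨((ρ.op a).graph.topologicalClosure).toLinearPMap,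
    (Submodule.toLinearPMap_graph_eq _ ?_).symm⟩
  rintro ⟨p1, p2⟩ hp hp1
  simp only at hp1
  subst hp1
  exact ρ.snd_eq_zero a hp

lemma HilbertRep.mem_closure_graph (ρ : HilbertRep A H) (a : A) {y z : H}
    (h : (y, z) ∈ (ρ.op a).graph.topologicalClosure) :
    (y, z) ∈ (ρ.op a).closure.graph := by
  rwa [← (ρ.op_isClosable a).graph_closure_eq_closure_graph]

/-- Limits of intertwiner-type sequences land in the closure of the graph. -/
lemma HilbertRep.tendsto_mem_closure (ρ : HilbertRep A H) (a : A)
    {u : ℕ → H × H} {p : H × H} (hmem : ∀ n, u n ∈ (ρ.op a).graph)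
    (htend : Tendsto u atTop (𝓝 p)) :
    p ∈ (ρ.op a).graph.topologicalClosure := by
  rw [← SetLike.mem_coe, Submodule.topologicalClosure_coe]
  exact mem_closure_of_tendsto htend (Filter.Eventually.of_forall hmem)

theorem starIntertwiners_isClosed (ρ : HilbertRep A H) (hρ : ρ.IsClosedRep) :
    IsClosed {x : H →L[ℂ] H | IsStarIntertwiner ρ x} := by
  refine IsSeqClosed.isClosed ?_
  intro u x hu hux ξ
  have happ : ∀ v : H, Tendsto (fun n => u n v) atTop (𝓝 (x v)) := fun v =>
    ((ContinuousLinearMap.apply ℂ H v).continuous.tendsto x).comp hux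
  have hadj : Tendsto (fun n => ContinuousLinearMap.adjoint (u n)) atTop
      (𝓝 (ContinuousLinearMap.adjoint x)) :=
    ((ContinuousLinearMap.adjoint :
      (H →L[ℂ] H) ≃ₗᵢ⋆[ℂ] (H →L[ℂ] H)).continuous.tendsto x).comp hux
  have happ' : ∀ v : H, Tendsto (fun n => ContinuousLinearMap.adjoint (u n) v) atTop
      (𝓝 (ContinuousLinearMap.adjoint x v)) := fun v =>
    ((ContinuousLinearMap.apply ℂ H v).continuous.tendsto _).comp hadj
  -- the key closure membership facts
  have hx : ∀ (ζ : ρ.dom) (a : A),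
      (x (ζ : H), x ((ρ.π a ζ : ρ.dom) : H)) ∈ (ρ.op a).graph.topologicalClosure := by
    intro ζ a
    refine ρ.tendsto_mem_closure a (u := fun n => (u n ζ, u n ((ρ.π a ζ : ρ.dom) : H)))
      (fun n => ?_) ((happ _).prodMk_nhds (happ _))
    obtain ⟨η, _, hη, _, hcom⟩ := hu n ζ
    have := ρ.mem_graph_op a η
    rwa [hη, (hcom a).1] at this
  have hy : ∀ (ζ : ρ.dom) (a : A),
      (ContinuousLinearMap.adjoint x (ζ : H),
        ContinuousLinearMap.adjoint x ((ρ.π a ζ : ρ.dom) : H)) ∈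
        (ρ.op a).graph.topologicalClosure := by
    intro ζ a
    refine ρ.tendsto_mem_closure a
      (u := fun n => (ContinuousLinearMap.adjoint (u n) ζ,
        ContinuousLinearMap.adjoint (u n) ((ρ.π a ζ : ρ.dom) : H)))
      (fun n => ?_) ((happ' _).prodMk_nhds (happ' _))
    obtain ⟨_, ζ', _, hζ, hcom⟩ := hu n ζ
    have := ρ.mem_graph_op a ζ'
    rwa [hζ, (hcom a).2] at this
  -- hence x ξ and x* ξ lie in the domain
  have hdom : ∀ y : H, (∀ a : A, ∃ z : H, (y, z) ∈ (ρ.op a).graph.topologicalClosure) →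
      y ∈ ρ.dom := by
    intro y hval
    have : y ∈ (ρ.dom : Set H) := by
      rw [hρ]
      refine Set.mem_iInter.mpr fun a => ?_
      obtain ⟨z, hz⟩ := hval a
      have hz' := ρ.mem_closure_graph a hz
      exact LinearPMap.mem_domain_iff.mpr ⟨z, hz'⟩
    exact this
  have hxξ : x (ξ : H) ∈ ρ.dom := hdom _ fun a => ⟨_, hx ξ a⟩
  have hyξ : ContinuousLinearMap.adjoint x (ξ : H) ∈ ρ.dom := hdom _ fun a => ⟨_, hy ξ a⟩
  refine ⟨⟨x (ξ : H), hxξ⟩, ⟨ContinuousLinearMap.adjoint x (ξ : H), hyξ⟩, rfl, rfl, fun a => ?_⟩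
  constructor
  · -- value of π a at x ξ
    have h1 := ρ.mem_closure_graph a (hx ξ a)
    have h2 : ((x (ξ : H) : H), ((ρ.π a ⟨x (ξ : H), hxξ⟩ : ρ.dom) : H)) ∈
        (ρ.op a).closure.graph :=
      LinearPMap.le_graph_of_le (ρ.op a).le_closure (ρ.mem_graph_op a ⟨x (ξ : H), hxξ⟩)
    exact (ρ.op a).closure.mem_graph_snd_inj' h2 h1 rfl
  · have h1 := ρ.mem_closure_graph a (hy ξ a)
    have h2 : ((ContinuousLinearMap.adjoint x (ξ : H) : H),
        ((ρ.π a ⟨ContinuousLinearMap.adjoint x (ξ : H), hyξ⟩ : ρ.dom) : H)) ∈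
        (ρ.op a).closure.graph :=
      LinearPMap.le_graph_of_le (ρ.op a).le_closure
        (ρ.mem_graph_op a ⟨ContinuousLinearMap.adjoint x (ξ : H), hyξ⟩)
    exact (ρ.op a).closure.mem_graph_snd_inj' h2 h1 rfl

lemma isStarIntertwiner_one (ρ : HilbertRep A H) : IsStarIntertwiner ρ (1 : H →L[ℂ] H) := by
  intro ξ
  have h1 : ContinuousLinearMap.adjoint (1 : H →L[ℂ] H) = 1 := by
    rw [← ContinuousLinearMap.star_eq_adjoint, star_one]
  exact ⟨ξ, ξ, by simp, by simp [h1], fun a => ⟨by simp, by simp [h1]⟩⟩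

lemma isStarIntertwiner_zero (ρ : HilbertRep A H) : IsStarIntertwiner ρ (0 : H →L[ℂ] H) := by
  intro ξ
  have h1 : ContinuousLinearMap.adjoint (0 : H →L[ℂ] H) = 0 := by
    rw [← ContinuousLinearMap.star_eq_adjoint, star_zero]
  exact ⟨0, 0, by simp, by simp [h1], fun a => ⟨by simp, by simp [h1]⟩⟩

lemma isStarIntertwiner_algebraMap (ρ : HilbertRep A H) (c : ℂ) :
    IsStarIntertwiner ρ (algebraMap ℂ (H →L[ℂ] H) c) := by
  intro ξ
  have h1 : ContinuousLinearMap.adjoint (algebraMap ℂ (H →L[ℂ] H) c) =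
      algebraMap ℂ (H →L[ℂ] H) (starRingEnd ℂ c) := by
    rw [← ContinuousLinearMap.star_eq_adjoint, ← algebraMap_star_comm]; rfl
  refine ⟨c • ξ, (starRingEnd ℂ c) • ξ, ?_, ?_, fun a => ⟨?_, ?_⟩⟩
  · simp [Algebra.algebraMap_eq_smul_one]
  · rw [h1]; simp [Algebra.algebraMap_eq_smul_one]
  · simp [Algebra.algebraMap_eq_smul_one]
  · rw [h1]; simp [Algebra.algebraMap_eq_smul_one]

lemma isStarIntertwiner_mul (ρ : HilbertRep A H) {x y : H →L[ℂ] H}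
    (hx : IsStarIntertwiner ρ x) (hy : IsStarIntertwiner ρ y) :
    IsStarIntertwiner ρ (x * y) := by
  intro ξ
  have hadj : ContinuousLinearMap.adjoint (x * y) =
      ContinuousLinearMap.adjoint y * ContinuousLinearMap.adjoint x := by
    rw [← ContinuousLinearMap.star_eq_adjoint, star_mul,
      ContinuousLinearMap.star_eq_adjoint, ContinuousLinearMap.star_eq_adjoint]
  obtain ⟨η₁, _, hη₁, _, hcy⟩ := hy ξ
  obtain ⟨η, _, hη, _, hcx⟩ := hx η₁
  obtain ⟨_, ζ₁, _, hζ₁, hcx'⟩ := hx ξ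
  obtain ⟨_, ζ, _, hζ, hcy'⟩ := hy ζ₁
  refine ⟨η, ζ, ?_, ?_, fun a => ⟨?_, ?_⟩⟩
  · rw [hη, hη₁]; rfl
  · rw [hζ, hζ₁, hadj]; rfl
  · rw [(hcx a).1, (hcy a).1]; rfl
  · rw [(hcy' a).2, (hcx' a).2, hadj]; rfl

lemma isStarIntertwiner_add (ρ : HilbertRep A H) {x y : H →L[ℂ] H}
    (hx : IsStarIntertwiner ρ x) (hy : IsStarIntertwiner ρ y) :
    IsStarIntertwiner ρ (x + y) := by
  intro ξ
  have hadj : ContinuousLinearMap.adjoint (x + y) =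
      ContinuousLinearMap.adjoint x + ContinuousLinearMap.adjoint y := map_add _ _ _
  obtain ⟨η₁, ζ₁, hη₁, hζ₁, hc₁⟩ := hx ξ
  obtain ⟨η₂, ζ₂, hη₂, hζ₂, hc₂⟩ := hy ξ
  refine ⟨η₁ + η₂, ζ₁ + ζ₂, ?_, ?_, fun a => ⟨?_, ?_⟩⟩
  · push_cast [hη₁, hη₂]; simp
  · push_cast [hζ₁, hζ₂, hadj]; simp
  · push_cast [_root_.map_add, ContinuousLinearMap.add_apply, (hc₁ a).1, (hc₂ a).1]; rfl
  · push_cast [_root_.map_add, ContinuousLinearMap.add_apply, (hc₁ a).2, (hc₂ a).2, hadj]; rfl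

lemma isStarIntertwiner_star (ρ : HilbertRep A H) {x : H →L[ℂ] H}
    (hx : IsStarIntertwiner ρ x) : IsStarIntertwiner ρ (star x) := by
  intro ξ
  obtain ⟨η, ζ, hη, hζ, hc⟩ := hx ξ
  refine ⟨ζ, η, ?_, ?_, fun a => ⟨?_, ?_⟩⟩
  · rw [ContinuousLinearMap.star_eq_adjoint]; exact hζ
  · rw [ContinuousLinearMap.star_eq_adjoint, ContinuousLinearMap.adjoint_adjoint]; exact hη
  · rw [ContinuousLinearMap.star_eq_adjoint]; exact (hc a).2
  · rw [ContinuousLinearMap.star_eq_adjoint, ContinuousLinearMap.adjoint_adjoint]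
    exact (hc a).1

/-- For a closed representation `(𝒟, π)` of a unital `⋆`-algebra on a Hilbert space, the set of
adjointable `⋆`-intertwiners is a unital C*-subalgebra of `B(H)`: it is a `⋆`-closed unital
subalgebra which is closed in the operator norm. -/
theorem starIntertwiners_cstar_subalgebra (ρ : HilbertRep A H) (hρ : ρ.IsClosedRep) :
    ∃ S : StarSubalgebra ℂ (H →L[ℂ] H),
      (S : Set (H →L[ℂ] H)) = {x | IsStarIntertwiner ρ x} ∧
      IsClosed (S : Set (H →L[ℂ] H)) := by
  refine ⟨{ carrier := {x | IsStarIntertwiner ρ x},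
            one_mem' := isStarIntertwiner_one ρ,
            mul_mem' := fun hx hy => isStarIntertwiner_mul ρ hx hy,
            zero_mem' := isStarIntertwiner_zero ρ,
            add_mem' := fun hx hy => isStarIntertwiner_add ρ hx hy,
            algebraMap_mem' := isStarIntertwiner_algebraMap ρ,
            star_mem' := fun hx => isStarIntertwiner_star ρ hx }, rfl, ?_⟩
  exact starIntertwiners_isClosed ρ hρ
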